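/- Let ≺ be an acyclic and transitive binary relation on a finite set r, and define X ≪ Y by: for all x ∈ X \ Y there exists y ∈ Y \ X with x ≺ y. Then ≪ is transitive. -/
import Mathlib


/-- A relation is acyclic if no element is related to itself by the transitive closure. -/
def Acyclic {α : Type*} (prec : α → α → Prop) : Prop :=
  ∀ x, ¬ Relation.TransGen prec x x

/-- The global preference order on sets of tuples: `X ≪ Y`. -/
def ll {α : Type*} (prec : α → α → Prop) (X Y : Set α) : Prop :=
  ∀ x ∈ X \ Y, ∃ y ∈ Y \ X, prec x y

/-- Closed neighborhood of `x` in the conflict graph. -/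
def nbhd {α : Type*} (conflict : α → α → Prop) (x : α) : Set α :=
  {x} ∪ {y | conflict x y}

/-- The winnow operator: elements of `s` not dominated by any element of `s`. -/
def winnow {α : Type*} (prec : α → α → Prop) (s : Set α) : Set α :=
  {t ∈ s | ¬ ∃ t' ∈ s, prec t t'}

/-- A repair: a maximal subset of `r` containing no conflicting pair. -/
def IsRepair {α : Type*} (r : Set α) (conflict : α → α → Prop) (X : Set α) : Prop :=
  X ⊆ r ∧ (∀ a ∈ X, ∀ b ∈ X, ¬ conflict a b) ∧
    ∀ y ∈ r, y ∉ X → ∃ a ∈ X, conflict y a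

/-- A locally preferred repair: obtainable by iteratively choosing an undominated
tuple and removing it together with its conflict neighborhood. -/
def IsLRepair {α : Type*} (r : Set α) (conflict prec : α → α → Prop) (X : Set α) : Prop :=
  ∃ (n : ℕ) (x : Fin n → α), Function.Injective x ∧ X = Set.range x ∧
    (∀ i : Fin n, x i ∈ winnow prec (r \ {y | ∃ j, j < i ∧ y ∈ nbhd conflict (x j)})) ∧
    winnow prec (r \ {y | ∃ i, y ∈ nbhd conflict (x i)}) = ∅

/-- A globally preferred repair: a `≪`-maximal repair. -/
def IsGRepair {α : Type*} (r : Set α) (conflict prec : α → α → Prop) (X : Set α) : Prop :=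
  IsRepair r conflict X ∧ ∀ Y, IsRepair r conflict Y → ll prec X Y → Y = X

/-- if ≺ is acyclic and transitive, then ≪ is transitive. -/
theorem ll_trans {α : Type*} (r : Set α) (hr : r.Finite) (prec : α → α → Prop)
    (hacyc : Acyclic prec) (htrans : Transitive prec) (X Y Z : Set α)
    (hX : X ⊆ r) (hY : Y ⊆ r) (hZ : Z ⊆ r)
    (hXY : ll prec X Y) (hYZ : ll prec Y Z) : ll prec X Z := by
  classical
  have hfin : ∀ a : α, ({b ∈ r | prec a b}).Finite :=
    fun a => hr.subset (fun b hb => hb.1)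
  have hirr : ∀ a, ¬ prec a a := fun a h => hacyc a (Relation.TransGen.single h)
  have hdec : ∀ a b, b ∈ r → prec a b →
      ({c ∈ r | prec b c}).ncard < ({c ∈ r | prec a c}).ncard := by
    intro a b hbr hab
    apply Set.ncard_lt_ncard _ (hfin a)
    constructor
    · intro c hc
      exact ⟨hc.1, htrans hab hc.2⟩
    · intro hsub
      exact hirr b (hsub ⟨hbr, hab⟩).2
  have key : ∀ n : ℕ, ∀ a, a ∈ r → ({b ∈ r | prec a b}).ncard ≤ n →
      ((a ∈ X \ Y → ∃ z ∈ Z \ X, prec a z) ∧ (a ∈ Y \ Z → ∃ z ∈ Z \ X, prec a z)) := by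
    intro n
    induction n with
    | zero =>
      intro a har hcard
      have hempty : ∀ b, b ∈ r → ¬ prec a b := by
        intro b hbr hab
        have h0 : ({b ∈ r | prec a b}) = ∅ :=
          (Set.ncard_eq_zero (hfin a)).mp (Nat.le_zero.mp hcard)
        have : b ∈ ({b ∈ r | prec a b}) := ⟨hbr, hab⟩
        rw [h0] at this
        exact this
      constructor
      · intro haXY
        obtain ⟨y, hy, hay⟩ := hXY a haXY
        exact absurd hay (hempty y (hY hy.1))
      · intro haYZ
        obtain ⟨z, hz, haz⟩ := hYZ a haYZ
        exact absurd haz (hempty z (hZ hz.1))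
    | succ n ih =>
      intro a har hcard
      constructor
      · intro haXY
        obtain ⟨y, hy, hay⟩ := hXY a haXY
        by_cases hyZ : y ∈ Z
        · exact ⟨y, ⟨hyZ, hy.2⟩, hay⟩
        · have hyr : y ∈ r := hY hy.1
          have hlt : ({b ∈ r | prec y b}).ncard ≤ n :=
            Nat.lt_succ_iff.mp (lt_of_lt_of_le (hdec a y hyr hay) hcard)
          obtain ⟨z, hz, hyz⟩ := (ih y hyr hlt).2 ⟨hy.1, hyZ⟩
          exact ⟨z, hz, htrans hay hyz⟩
      · intro haYZ
        obtain ⟨z, hz, haz⟩ := hYZ a haYZ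
        by_cases hzX : z ∈ X
        · have hzr : z ∈ r := hZ hz.1
          have hlt : ({b ∈ r | prec z b}).ncard ≤ n :=
            Nat.lt_succ_iff.mp (lt_of_lt_of_le (hdec a z hzr haz) hcard)
          obtain ⟨z', hz', hzz'⟩ := (ih z hzr hlt).1 ⟨hzX, hz.2⟩
          exact ⟨z', hz', htrans haz hzz'⟩
        · exact ⟨z, ⟨hz.1, hzX⟩, haz⟩
  intro x hx
  by_cases hxY : x ∈ Y
  · exact (key _ x (hX hx.1) le_rfl).2 ⟨hxY, hx.2⟩
  · exact (key _ x (hX hx.1) le_rfl).1 ⟨hx.1, hxY⟩
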